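/- For every L(1,2)-edge labeling f of G_v and every edge e in S_1, at most one edge of G_v has label f(e)+1, and at most one edge of G_v has label f(e)−1. -/

import Mathlib

/-- The infinite triangular grid `T6`. -/
def T6 : SimpleGraph (ℤ × ℤ) where
  Adj u v := (v.1 - u.1, v.2 - u.2) ∈
    ({(1,0), (-1,0), (0,1), (0,-1), (1,1), (-1,-1)} : Set (ℤ × ℤ))
  symm := by
    constructor
    rintro ⟨a, b⟩ ⟨c, d⟩ h
    simp only [Set.mem_insert_iff, Set.mem_singleton_iff, Prod.mk.injEq] at h ⊢
    omega
  loopless := by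
    constructor
    rintro ⟨a, b⟩ h
    simp only [Set.mem_insert_iff, Set.mem_singleton_iff, Prod.mk.injEq, sub_self] at h
    omega

/-- `f` is an L(1,2)-edge labeling of `G`. -/
def IsL12 {V : Type*} (G : SimpleGraph V) (f : Sym2 V → ℕ) : Prop :=
  (∀ e1 ∈ G.edgeSet, ∀ e2 ∈ G.edgeSet, e1 ≠ e2 → (∃ v, v ∈ e1 ∧ v ∈ e2) →
    f e1 ≠ f e2) ∧
  (∀ e1 ∈ G.edgeSet, ∀ e2 ∈ G.edgeSet, e1 ≠ e2 → ¬ (∃ v, v ∈ e1 ∧ v ∈ e2) →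
    (∃ e3 ∈ G.edgeSet, (∃ v, v ∈ e1 ∧ v ∈ e3) ∧ (∃ v, v ∈ e2 ∧ v ∈ e3)) →
    2 ≤ |(f e1 : ℤ) - (f e2 : ℤ)|)

/-- The subgraph `G_v` of `T6`: all edges with an endpoint adjacent to `v`. -/
def Gv (v : ℤ × ℤ) : SimpleGraph (ℤ × ℤ) where
  Adj u w := T6.Adj u w ∧ (T6.Adj v u ∨ T6.Adj v w)
  symm := ⟨fun u w h => ⟨T6.symm.symm _ _ h.1, h.2.symm⟩⟩
  loopless := ⟨fun u h => T6.loopless.irrefl u h.1⟩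

/-- `S_1`: the edges of `G_v` incident to `v`. -/
def S1 (v : ℤ × ℤ) : Set (Sym2 (ℤ × ℤ)) := {e | e ∈ (Gv v).edgeSet ∧ v ∈ e}

/-- `S_2`: the edges of `G_v` both of whose endpoints are adjacent to `v`. -/
def S2 (v : ℤ × ℤ) : Set (Sym2 (ℤ × ℤ)) := {e | e ∈ (Gv v).edgeSet ∧ ∀ u ∈ e, T6.Adj v u}

/-- `S_3`: the remaining edges of `G_v`. -/
def S3 (v : ℤ × ℤ) : Set (Sym2 (ℤ × ℤ)) := (Gv v).edgeSet \ (S1 v ∪ S2 v)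

/-- For an edge `e ∈ S_1`, at most one edge of `G_v` has label `f e + 1` and at most
one edge of `G_v` has label `f e - 1`. -/

lemma exists_mid (v : ℤ × ℤ) (e' : Sym2 (ℤ × ℤ)) (h : e' ∈ (Gv v).edgeSet) :
    ∃ u, u ∈ e' ∧ T6.Adj v u := by
  induction e' using Sym2.ind with
  | _ a b =>
    rw [SimpleGraph.mem_edgeSet] at h
    change T6.Adj a b ∧ (T6.Adj v a ∨ T6.Adj v b) at h
    rcases h.2 with h' | h'
    · exact ⟨a, Sym2.mem_mk_left a b, h'⟩
    · exact ⟨b, Sym2.mem_mk_right a b, h'⟩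

lemma key (v : ℤ × ℤ) (f : Sym2 (ℤ × ℤ) → ℕ) (hf : IsL12 (Gv v) f)
    (e : Sym2 (ℤ × ℤ)) (he : e ∈ S1 v)
    (e1 e2 : Sym2 (ℤ × ℤ)) (h1 : e1 ∈ (Gv v).edgeSet) (h2 : e2 ∈ (Gv v).edgeSet)
    (hd1 : |(f e1 : ℤ) - (f e : ℤ)| = 1) (heq : f e1 = f e2) : e1 = e2 := by
  by_contra hne
  obtain ⟨heE, hvE⟩ := he
  have hne1 : f e1 ≠ f e := by
    intro h
    rw [h, sub_self, abs_zero] at hd1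
    exact one_ne_zero hd1.symm
  have share : ∀ e' ∈ (Gv v).edgeSet, f e' ≠ f e → |(f e' : ℤ) - (f e : ℤ)| < 2 →
      ∃ u, u ∈ e ∧ u ∈ e' := by
    intro e' h' hne' hlt
    by_contra hns
    obtain ⟨u, hu1, hu2⟩ := exists_mid v e' h'
    have he3 : s(v, u) ∈ (Gv v).edgeSet := by
      rw [SimpleGraph.mem_edgeSet]
      exact ⟨hu2, Or.inr hu2⟩
    have := hf.2 e heE e' h' (fun h => hne' (by rw [h])) hns
      ⟨s(v, u), he3, ⟨v, hvE, Sym2.mem_mk_left v u⟩,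
        ⟨u, hu1, Sym2.mem_mk_right v u⟩⟩
    rw [abs_sub_comm] at this
    linarith
  have hd2 : |(f e2 : ℤ) - (f e : ℤ)| = 1 := by rw [← heq]; exact hd1
  have hne2 : f e2 ≠ f e := heq ▸ hne1
  obtain ⟨u1, hu1e, hu1⟩ := share e1 h1 hne1 (by rw [hd1]; norm_num)
  obtain ⟨u2, hu2e, hu2⟩ := share e2 h2 hne2 (by rw [hd2]; norm_num)
  have hns12 : ¬ ∃ u, u ∈ e1 ∧ u ∈ e2 := by
    intro hsh
    exact hf.1 e1 h1 e2 h2 hne hsh heq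
  have := hf.2 e1 h1 e2 h2 hne hns12
    ⟨e, heE, ⟨u1, hu1, hu1e⟩, ⟨u2, hu2, hu2e⟩⟩
  rw [heq, sub_self, abs_zero] at this
  linarith

theorem S1_adjacent_labels_once (v : ℤ × ℤ) (f : Sym2 (ℤ × ℤ) → ℕ)
    (hf : IsL12 (Gv v) f) : ∀ e ∈ S1 v,
    (∀ e1 ∈ (Gv v).edgeSet, ∀ e2 ∈ (Gv v).edgeSet,
      f e1 = f e + 1 → f e2 = f e + 1 → e1 = e2) ∧
    (∀ e1 ∈ (Gv v).edgeSet, ∀ e2 ∈ (Gv v).edgeSet,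
      (f e1 : ℤ) = (f e : ℤ) - 1 → (f e2 : ℤ) = (f e : ℤ) - 1 → e1 = e2) := by
  intro e he
  constructor
  · intro e1 h1 e2 h2 hf1 hf2
    refine key v f hf e he e1 e2 h1 h2 ?_ (by omega)
    rw [hf1]; push_cast; ring_nf; simp
  · intro e1 h1 e2 h2 hf1 hf2
    refine key v f hf e he e1 e2 h1 h2 ?_ (by omega)
    rw [hf1]; ring_nf; simp
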